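/- arXiv:2001.11697 — 3 statements merged into one kernel-verified Lean document; each statement's English description precedes it below -/
import Mathlib

section
/- Let E be a finite-dimensional real inner product space of dimension n, and let A and B be symmetric positive semidefinite linear endomorphisms of E, with eigenvalues listed in increasing order and counted with multiplicity: λ_0(A) ≤ … ≤ λ_{n-1}(A) and λ_0(B) ≤ … ≤ λ_{n-1}(B). Let ε ∈ [0,1). If |⟨(A−B)x, x⟩| ≤ ε·⟨Ax, x⟩ for every x ∈ E, then for every index i one has (1−ε)·λ_i(A) ≤ λ_i(B) ≤ (1+ε)·λ_i(A). -/
open RealInnerProductSpace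

section Aux
variable {E : Type*} [NormedAddCommGroup E] [InnerProductSpace ℝ E]
    [FiniteDimensional ℝ E] {n : ℕ}

lemma bn_quad (b : OrthonormalBasis (Fin n) ℝ E) {A : E →ₗ[ℝ] E}
    (hA : A.IsSymmetric) {μ : Fin n → ℝ} (hb : ∀ i, A (b i) = μ i • b i) (x : E) :
    ⟪A x, x⟫ = ∑ j, μ j * (⟪b j, x⟫ * ⟪b j, x⟫) := by
  have := b.sum_inner_mul_inner (A x) x
  rw [← this]
  congr 1
  ext j
  have h1 : ⟪A x, b j⟫ = μ j * ⟪b j, x⟫ := by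
    rw [real_inner_comm, ← hA, hb j, inner_smul_left]
    simp [real_inner_comm]
  rw [h1]; ring

lemma bn_repr_zero (b : OrthonormalBasis (Fin n) ℝ E) (s : Finset (Fin n)) {x : E}
    (hx : x ∈ Submodule.span ℝ (b '' ↑s)) {j : Fin n} (hj : j ∉ s) :
    ⟪b j, x⟫ = 0 := by
  induction hx using Submodule.span_induction with
  | mem y hy =>
    obtain ⟨k, hk, rfl⟩ := hy
    have : j ≠ k := by rintro rfl; exact hj hk
    exact b.orthonormal.2 this
  | zero => simp
  | add y z _ _ hy hz => rw [inner_add_right, hy, hz]; ring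
  | smul c y _ hy => rw [inner_smul_right, hy]; ring

lemma bn_le (b : OrthonormalBasis (Fin n) ℝ E) {A : E →ₗ[ℝ] E}
    (hA : A.IsSymmetric) {μ : Fin n → ℝ} (hm : Monotone μ)
    (hb : ∀ i, A (b i) = μ i • b i) (i : Fin n) {x : E}
    (hx : x ∈ Submodule.span ℝ (b '' ↑(Finset.Iic i))) :
    ⟪A x, x⟫ ≤ μ i * ⟪x, x⟫ := by
  have hqx : ⟪x, x⟫ = ∑ j, ⟪b j, x⟫ * ⟪b j, x⟫ := by
    rw [← b.sum_inner_mul_inner x x]; congr 1; ext j; rw [real_inner_comm x (b j)]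
  rw [bn_quad b hA hb, hqx, Finset.mul_sum]
  apply Finset.sum_le_sum
  intro j _
  by_cases hj : j ∈ Finset.Iic i
  · exact mul_le_mul_of_nonneg_right (hm (Finset.mem_Iic.mp hj)) (mul_self_nonneg _)
  · rw [bn_repr_zero b _ hx hj]; simp

lemma bn_ge (b : OrthonormalBasis (Fin n) ℝ E) {A : E →ₗ[ℝ] E}
    (hA : A.IsSymmetric) {μ : Fin n → ℝ} (hm : Monotone μ)
    (hb : ∀ i, A (b i) = μ i • b i) (i : Fin n) {x : E}
    (hx : x ∈ Submodule.span ℝ (b '' ↑(Finset.Ici i))) :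
    μ i * ⟪x, x⟫ ≤ ⟪A x, x⟫ := by
  have hqx : ⟪x, x⟫ = ∑ j, ⟪b j, x⟫ * ⟪b j, x⟫ := by
    rw [← b.sum_inner_mul_inner x x]; congr 1; ext j; rw [real_inner_comm x (b j)]
  rw [bn_quad b hA hb, hqx, Finset.mul_sum]
  apply Finset.sum_le_sum
  intro j _
  by_cases hj : j ∈ Finset.Ici i
  · exact mul_le_mul_of_nonneg_right (hm (Finset.mem_Ici.mp hj)) (mul_self_nonneg _)
  · rw [bn_repr_zero b _ hx hj]; simp

lemma bn_finrank (b : OrthonormalBasis (Fin n) ℝ E) (s : Finset (Fin n)) :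
    Module.finrank ℝ (Submodule.span ℝ (b '' ↑s)) = s.card := by
  have li : LinearIndependent ℝ (fun j : s => b j) :=
    b.orthonormal.linearIndependent.comp _ Subtype.val_injective
  have hr : Set.range (fun j : s => b j) = b '' ↑s := by
    ext y; simp
  rw [← hr, finrank_span_eq_card li, Fintype.card_coe]

lemma bn_exists (hdim : Module.finrank ℝ E = n)
    (bA bB : OrthonormalBasis (Fin n) ℝ E) (i : Fin n) :
    ∃ x : E, x ≠ 0 ∧ x ∈ Submodule.span ℝ (bA '' ↑(Finset.Iic i)) ∧
      x ∈ Submodule.span ℝ (bB '' ↑(Finset.Ici i)) := by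
  set V := Submodule.span ℝ (bA '' ↑(Finset.Iic i))
  set W := Submodule.span ℝ (bB '' ↑(Finset.Ici i))
  have h1 : Module.finrank ℝ V = i.val + 1 := by
    rw [bn_finrank]; rw [Fin.card_Iic]
  have h2 : Module.finrank ℝ W = n - i.val := by
    rw [bn_finrank, Fin.card_Ici]
  have hsup : Module.finrank ℝ ↥(V ⊔ W) ≤ n := hdim ▸ Submodule.finrank_le _
  have := Submodule.finrank_sup_add_finrank_inf_eq V W
  have hpos : 0 < Module.finrank ℝ ↥(V ⊓ W) := by
    have hi : i.val < n := i.isLt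
    omega
  have hne : V ⊓ W ≠ ⊥ := by
    intro heq; rw [heq, finrank_bot] at hpos; omega
  obtain ⟨x, hx, hx0⟩ := Submodule.exists_mem_ne_zero_of_ne_bot hne
  exact ⟨x, hx0, (Submodule.mem_inf.mp hx).1, (Submodule.mem_inf.mp hx).2⟩

lemma bn_aux (hdim : Module.finrank ℝ E = n)
    {A B : E →ₗ[ℝ] E} (hA : A.IsSymmetric) (hB : B.IsSymmetric)
    {μA μB : Fin n → ℝ} (hmA : Monotone μA) (hmB : Monotone μB)
    (bA bB : OrthonormalBasis (Fin n) ℝ E)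
    (hbA : ∀ i, A (bA i) = μA i • bA i) (hbB : ∀ i, B (bB i) = μB i • bB i)
    {κ : ℝ} (hκ : 0 ≤ κ) (h : ∀ x : E, ⟪B x, x⟫ ≤ κ * ⟪A x, x⟫) (i : Fin n) :
    μB i ≤ κ * μA i := by
  obtain ⟨x, hx0, hxA, hxB⟩ := bn_exists hdim bA bB i
  have hxx : (0:ℝ) < ⟪x, x⟫ := by
    rw [real_inner_self_eq_norm_sq]
    exact pow_pos (norm_pos_iff.mpr hx0) 2
  have h1 : μB i * ⟪x, x⟫ ≤ ⟪B x, x⟫ := bn_ge bB hB hmB hbB i hxB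
  have h2 : ⟪A x, x⟫ ≤ μA i * ⟪x, x⟫ := bn_le bA hA hmA hbA i hxA
  have : μB i * ⟪x, x⟫ ≤ κ * μA i * ⟪x, x⟫ := by
    calc μB i * ⟪x, x⟫ ≤ ⟪B x, x⟫ := h1
    _ ≤ κ * ⟪A x, x⟫ := h x
    _ ≤ κ * (μA i * ⟪x, x⟫) := mul_le_mul_of_nonneg_left h2 hκ
    _ = κ * μA i * ⟪x, x⟫ := by ring
  exact le_of_mul_le_mul_right this hxx

end Aux
/-- Belkin–Niyogi comparison lemma: if the quadratic form of `A - B` is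
bounded by `ε` times that of `A`, then the increasingly ordered eigenvalues
(with multiplicity) of the symmetric positive semidefinite operators `A` and `B`
agree up to a factor `1 ± ε`. -/
theorem stmt0 {E : Type*} [NormedAddCommGroup E] [InnerProductSpace ℝ E]
    [FiniteDimensional ℝ E] {n : ℕ} (hdim : Module.finrank ℝ E = n)
    (A B : E →ₗ[ℝ] E) (hA : A.IsSymmetric) (hB : B.IsSymmetric)
    (hApsd : ∀ x : E, 0 ≤ ⟪A x, x⟫) (hBpsd : ∀ x : E, 0 ≤ ⟪B x, x⟫)
    (μA μB : Fin n → ℝ) (hmA : Monotone μA) (hmB : Monotone μB)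
    (bA bB : OrthonormalBasis (Fin n) ℝ E)
    (hbA : ∀ i, A (bA i) = μA i • bA i) (hbB : ∀ i, B (bB i) = μB i • bB i)
    (ε : ℝ) (hε0 : 0 ≤ ε) (hε1 : ε < 1)
    (h : ∀ x : E, |⟪(A - B) x, x⟫| ≤ ε * ⟪A x, x⟫) :
    ∀ i : Fin n, (1 - ε) * μA i ≤ μB i ∧ μB i ≤ (1 + ε) * μA i := by
  have hdiff : ∀ x : E, |⟪A x, x⟫ - ⟪B x, x⟫| ≤ ε * ⟪A x, x⟫ := by
    intro x
    have := h x
    rwa [LinearMap.sub_apply, inner_sub_left] at this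
  have hup : ∀ x : E, ⟪B x, x⟫ ≤ (1 + ε) * ⟪A x, x⟫ := by
    intro x
    have := (abs_le.mp (hdiff x)).1
    linarith
  have hlo : ∀ x : E, (1 - ε) * ⟪A x, x⟫ ≤ ⟪B x, x⟫ := by
    intro x
    have := (abs_le.mp (hdiff x)).2
    linarith
  intro i
  constructor
  · -- use bn_aux with A' := (1-ε) • A against B, κ = 1
    set A' : E →ₗ[ℝ] E := (1 - ε) • A with hA'def
    have hA' : A'.IsSymmetric := by
      intro x y
      simp only [hA'def, LinearMap.smul_apply, inner_smul_left, inner_smul_right,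
        RCLike.conj_to_real, hA x y]
    have hbA' : ∀ j, A' (bA j) = ((1 - ε) * μA j) • bA j := by
      intro j
      simp [hA'def, hbA j, smul_smul]
    have hmA' : Monotone fun j => (1 - ε) * μA j :=
      hmA.const_mul (by linarith)
    have := bn_aux hdim hB hA' hmB hmA' bB bA hbB hbA' (κ := 1) zero_le_one
      (fun x => by
        have := hlo x
        simp only [hA'def, LinearMap.smul_apply, inner_smul_left, RCLike.conj_to_real]
        linarith) i
    linarith [this]
  · have := bn_aux hdim hA hB hmA hmB bA bB hbA hbB (κ := 1 + ε) (by linarith) hup i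
    linarith
end

section
/- Let λ : ℕ → ℝ be a sequence of nonnegative real numbers, let t ∈ (0,1], let α > 0, and let a ∈ ℓ²(ℕ, ℝ). Then ∑_{i} a_i²·(1 − exp(−λ_i t))/t ≥ (1/2)·min(α, 1/√t)·∑_{i : λ_i > α} a_i², where both series converge (the summands of the left-hand series are bounded by a_i²/t). -/
/-- Pointwise bound: if `α < l` and `0 < t ≤ 1`, then
`(1/2) * min α (1/√t) ≤ (1 - exp(-l*t))/t`. -/
lemma aux_pt (l t α : ℝ) (hl : α < l) (ht0 : 0 < t) (ht1 : t ≤ 1) (hα : 0 < α) :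
    (1 / 2) * min α (1 / Real.sqrt t) ≤ (1 - Real.exp (-(l * t))) / t := by
  have hst : 0 < Real.sqrt t := Real.sqrt_pos.mpr ht0
  have hts : t ≤ Real.sqrt t := by
    nlinarith [Real.sq_sqrt ht0.le, Real.sqrt_nonneg t, Real.sqrt_le_one.mpr ht1]
  set x := l * t with hx
  have hx0 : 0 ≤ x := mul_nonneg (le_trans hα.le hl.le) ht0.le
  rcases le_or_gt x 1 with h1 | h1
  · have h2 : 1 + x ≤ Real.exp x := by linarith [Real.add_one_le_exp x]
    have he : Real.exp (-x) ≤ 1 / (1 + x) := by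
      rw [Real.exp_neg, inv_eq_one_div]
      exact one_div_le_one_div_of_le (by linarith) h2
    have hkey : x / 2 ≤ 1 - Real.exp (-x) := by
      have ha : x / 2 ≤ x / (1 + x) := by
        rw [div_le_div_iff₀ (by norm_num) (by linarith)]; nlinarith
      have hb : 1 - 1 / (1 + x) = x / (1 + x) := by field_simp; ring
      linarith
    have hm : min α (1 / Real.sqrt t) ≤ l := le_trans (min_le_left _ _) hl.le
    rw [le_div_iff₀ ht0]
    calc (1/2) * min α (1 / Real.sqrt t) * t ≤ (1/2) * l * t := by
          nlinarith [mul_le_mul_of_nonneg_right hm ht0.le]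
      _ = x / 2 := by rw [hx]; ring
      _ ≤ 1 - Real.exp (-x) := hkey
  · have he : Real.exp (-x) ≤ 1 / 2 := by
      have h2 : Real.exp (-x) ≤ Real.exp (-1) := Real.exp_le_exp.mpr (by linarith)
      have h3 : Real.exp (-1) ≤ 1 / 2 := by
        rw [Real.exp_neg, inv_eq_one_div]
        have : (2:ℝ) ≤ Real.exp 1 := by nlinarith [Real.exp_one_gt_d9]
        exact one_div_le_one_div_of_le (by norm_num) this
      linarith
    have hm : min α (1 / Real.sqrt t) ≤ 1 / Real.sqrt t := min_le_right _ _
    rw [le_div_iff₀ ht0]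
    have h5 : t / Real.sqrt t ≤ 1 := (div_le_one hst).mpr hts
    have h6 : (1/2) * min α (1 / Real.sqrt t) * t ≤ 1/2 := by
      have hb : (1/2) * (1 / Real.sqrt t) * t = (t / Real.sqrt t) * (1/2) := by ring
      nlinarith [mul_le_mul_of_nonneg_right hm ht0.le]
    linarith

/-- Square-summability of the coefficients of an element of `ℓ²`. -/
lemma aux_sq_summable (a : lp (fun _ : ℕ => ℝ) 2) : Summable (fun i : ℕ => (a i)^2) := by
  have h := (lp.memℓp a).summable (by norm_num)
  simp only [ENNReal.toReal_ofNat, Real.norm_eq_abs] at h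
  simpa [sq_abs] using h

/-- ℓ² version of the lower bound `⟨D_t f, f⟩ ≥ (1/2) min(α, 1/√t) ‖f₂‖²` from the
Belkin–Niyogi convergence proof, where `f₂` collects the coefficients with `λ_i > α`. -/
theorem stmt2 (lam : ℕ → ℝ) (hlam : ∀ i, 0 ≤ lam i)
    (t : ℝ) (ht0 : 0 < t) (ht1 : t ≤ 1) (α : ℝ) (hα : 0 < α)
    (a : lp (fun _ : ℕ => ℝ) 2) :
    Summable (fun i : ℕ => (a i) ^ 2 * ((1 - Real.exp (-(lam i * t))) / t)) ∧
    Summable (fun i : {i : ℕ // α < lam i} => (a i.1) ^ 2) ∧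
    (1 / 2) * min α (1 / Real.sqrt t) * (∑' i : {i : ℕ // α < lam i}, (a i.1) ^ 2) ≤
      ∑' i : ℕ, (a i) ^ 2 * ((1 - Real.exp (-(lam i * t))) / t) := by
  have hsq := aux_sq_summable a
  have hexp1 : ∀ i : ℕ, Real.exp (-(lam i * t)) ≤ 1 := fun i => by
    rw [Real.exp_le_one_iff]
    have := mul_nonneg (hlam i) ht0.le
    linarith
  have hr0 : ∀ i : ℕ, 0 ≤ (1 - Real.exp (-(lam i * t))) / t := fun i =>
    div_nonneg (by linarith [hexp1 i]) ht0.le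
  have hr1 : ∀ i : ℕ, (1 - Real.exp (-(lam i * t))) / t ≤ 1 / t := fun i => by
    gcongr
    linarith [(Real.exp_pos (-(lam i * t))).le]
  have h1 : Summable (fun i : ℕ => (a i) ^ 2 * ((1 - Real.exp (-(lam i * t))) / t)) := by
    apply Summable.of_nonneg_of_le (fun i => mul_nonneg (sq_nonneg _) (hr0 i))
      (fun i => ?_) (hsq.mul_right (1/t))
    exact mul_le_mul_of_nonneg_left (hr1 i) (sq_nonneg _)
  have h2 : Summable (fun i : {i : ℕ // α < lam i} => (a i.1) ^ 2) := hsq.subtype _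
  refine ⟨h1, h2, ?_⟩
  have hpt : ∀ i : {i : ℕ // α < lam i},
      (1/2) * min α (1 / Real.sqrt t) * (a i.1)^2 ≤
        (a i.1)^2 * ((1 - Real.exp (-(lam i.1 * t))) / t) := fun i => by
    have := aux_pt (lam i.1) t α i.2 ht0 ht1 hα
    nlinarith [sq_nonneg (a i.1)]
  rw [← tsum_mul_left]
  have hstep1 : (∑' i : {i : ℕ // α < lam i}, (1/2) * min α (1 / Real.sqrt t) * (a i.1)^2)
      ≤ ∑' i : {i : ℕ // α < lam i}, (a i.1)^2 * ((1 - Real.exp (-(lam i.1 * t))) / t) :=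
    Summable.tsum_le_tsum hpt (h2.mul_left _) (h1.subtype _)
  have hstep2 : (∑' i : {i : ℕ // α < lam i}, (a i.1)^2 * ((1 - Real.exp (-(lam i.1 * t))) / t))
      ≤ ∑' i : ℕ, (a i)^2 * ((1 - Real.exp (-(lam i * t))) / t) :=
    Summable.tsum_subtype_le _ _ (fun i => mul_nonneg (sq_nonneg _) (hr0 i)) h1
  exact hstep1.trans hstep2
end

section
/- Let N, d ≥ 1, let S be a real symmetric (N·d)×(N·d) matrix, and let v_1, …, v_{Nd} be an orthonormal basis of ℝ^{Nd} consisting of eigenvectors of S, with S·v_l = λ_l·v_l. For x ∈ ℝ^{Nd} and 1 ≤ i ≤ N write x(i) ∈ ℝ^d for the i-th block of x (the coordinates with indices (i−1)d+1, …, id). Then for every k ∈ ℕ and all 1 ≤ i,j ≤ N, the (i,j)-th d×d block S^{2k}(i,j) of the matrix power S^{2k} satisfies ‖S^{2k}(i,j)‖_{HS}² = ∑_{l,r=1}^{Nd} (λ_l·λ_r)^{2k}·⟨v_l(i), v_r(i)⟩·⟨v_l(j), v_r(j)⟩, where ‖·‖_{HS} is the Frobenius norm of the d×d block and ⟨·,·⟩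 is the Euclidean inner product of ℝ^d. -/
open Matrix

/-- The index in `Fin (N * d)` of the `r`-th coordinate of the `i`-th `d`-dimensional
block of a vector in `ℝ^{Nd}`. -/
def blockIdx {N d : ℕ} (i : Fin N) (r : Fin d) : Fin (N * d) :=
  ⟨i.1 * d + r.1, by
    have h1 : i.1 * d + r.1 < (i.1 + 1) * d := by
      have := r.2; nlinarith
    have h2 : (i.1 + 1) * d ≤ N * d := Nat.mul_le_mul_right d i.2
    omega⟩

lemma sum4_comm {α β γ δ : Type*} [Fintype α] [Fintype β] [Fintype γ] [Fintype δ]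
    (f : α → β → γ → δ → ℝ) :
    ∑ a, ∑ b, ∑ c, ∑ e, f a b c e = ∑ c, ∑ e, ∑ a, ∑ b, f a b c e :=
  calc ∑ a, ∑ b, ∑ c, ∑ e, f a b c e
      = ∑ a, ∑ c, ∑ b, ∑ e, f a b c e :=
        Finset.sum_congr rfl fun a _ => Finset.sum_comm
    _ = ∑ c, ∑ a, ∑ b, ∑ e, f a b c e := Finset.sum_comm
    _ = ∑ c, ∑ a, ∑ e, ∑ b, f a b c e :=
        Finset.sum_congr rfl fun c _ => Finset.sum_congr rfl fun a _ => Finset.sum_comm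
    _ = ∑ c, ∑ e, ∑ a, ∑ b, f a b c e :=
        Finset.sum_congr rfl fun c _ => Finset.sum_comm


/-- Singer–Wu identity: for a symmetric matrix `S` with orthonormal eigenbasis
`v_l` (eigenvalues `λ_l`), the squared Hilbert–Schmidt norm of the `(i,j)`-th
`d×d` block of `S^{2k}` equals
`∑_{l,r} (λ_l λ_r)^{2k} ⟨v_l(i), v_r(i)⟩ ⟨v_l(j), v_r(j)⟩`. -/
theorem stmt8 (N d : ℕ) (hN : 1 ≤ N) (hd : 1 ≤ d)
    (S : Matrix (Fin (N * d)) (Fin (N * d)) ℝ) (hS : S.IsSymm)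
    (lam : Fin (N * d) → ℝ) (v : Fin (N * d) → Fin (N * d) → ℝ)
    (hortho : ∀ l r, (∑ q, v l q * v r q) = if l = r then (1 : ℝ) else 0)
    (heig : ∀ l, S *ᵥ v l = lam l • v l)
    (k : ℕ) (i j : Fin N) :
    ∑ r : Fin d, ∑ s : Fin d, ((S ^ (2 * k)) (blockIdx i r) (blockIdx j s)) ^ 2
      = ∑ l, ∑ r, (lam l * lam r) ^ (2 * k) *
          (∑ q : Fin d, v l (blockIdx i q) * v r (blockIdx i q)) *
          (∑ q : Fin d, v l (blockIdx j q) * v r (blockIdx j q)) := by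
  let V : Matrix (Fin (N * d)) (Fin (N * d)) ℝ := Matrix.of fun a l => v l a
  have hVV : Vᵀ * V = 1 := by
    ext l r
    simpa [Matrix.mul_apply, Matrix.one_apply, V] using hortho l r
  have hVV' : V * Vᵀ = 1 := mul_eq_one_comm.mp hVV
  have hSV : S * V = V * Matrix.diagonal lam := by
    ext a l
    have := congrFun (heig l) a
    simp only [Matrix.mulVec, dotProduct, Pi.smul_apply, smul_eq_mul] at this
    simp only [Matrix.mul_apply, Matrix.of_apply, V, Matrix.diagonal_apply, mul_ite, mul_zero,
      Finset.sum_ite_eq', Finset.mem_univ, if_true]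
    rw [this]; ring
  have hdiag : ∀ m : ℕ, (fun l => lam l ^ m * lam l) = fun l => lam l ^ (m + 1) := by
    intro m; funext l; rw [pow_succ]
  have hpow : ∀ m, S ^ m = V * Matrix.diagonal (fun l => lam l ^ m) * Vᵀ := by
    intro m
    induction m with
    | zero => simp [hVV']
    | succ m ih =>
        rw [pow_succ, ih]
        calc V * Matrix.diagonal (fun l => lam l ^ m) * Vᵀ * S
            = V * Matrix.diagonal (fun l => lam l ^ m) * (Vᵀ * Sᵀ) := by
              rw [hS.eq, Matrix.mul_assoc]
          _ = V * Matrix.diagonal (fun l => lam l ^ m) * ((S * V)ᵀ) := by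
              rw [Matrix.transpose_mul]
          _ = V * Matrix.diagonal (fun l => lam l ^ m) * (Matrix.diagonal lam * Vᵀ) := by
              rw [hSV, Matrix.transpose_mul, Matrix.diagonal_transpose]
          _ = V * (Matrix.diagonal (fun l => lam l ^ m) * Matrix.diagonal lam) * Vᵀ := by
              simp only [Matrix.mul_assoc]
          _ = V * Matrix.diagonal (fun l => lam l ^ (m + 1)) * Vᵀ := by
              rw [Matrix.diagonal_mul_diagonal, hdiag]
  have key : ∀ a b, (S ^ (2 * k)) a b = ∑ l, lam l ^ (2 * k) * (v l a * v l b) := by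
    intro a b
    rw [hpow]
    simp [Matrix.mul_apply, Matrix.diagonal, V, Finset.sum_mul, mul_comm, mul_assoc, mul_left_comm]
  simp only [key]
  rw [show (∑ r : Fin d, ∑ s : Fin d,
      (∑ l, lam l ^ (2 * k) * (v l (blockIdx i r) * v l (blockIdx j s))) ^ 2)
    = ∑ r : Fin d, ∑ s : Fin d, ∑ l, ∑ m,
        (lam l ^ (2 * k) * (v l (blockIdx i r) * v l (blockIdx j s))) *
        (lam m ^ (2 * k) * (v m (blockIdx i r) * v m (blockIdx j s))) from by
      simp [sq, Finset.sum_mul_sum]]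
  rw [sum4_comm (fun r s l m =>
      (lam l ^ (2 * k) * (v l (blockIdx i r) * v l (blockIdx j s))) *
      (lam m ^ (2 * k) * (v m (blockIdx i r) * v m (blockIdx j s))))]
  refine Finset.sum_congr rfl fun l _ => Finset.sum_congr rfl fun m _ => ?_
  rw [mul_assoc, Finset.sum_mul_sum, mul_pow, Finset.mul_sum]
  refine Finset.sum_congr rfl fun r _ => ?_
  rw [Finset.mul_sum]
  refine Finset.sum_congr rfl fun s _ => ?_
  ring
end
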